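/- The g elements ω_i (i ∈ ℤ/(g−1)) and η are linearly independent over ℂ, and the 3g−3 elements x_i := ω_i², y_i := ω_i·η, z_i := ω_{i−1}·ω_i (i ∈ ℤ/(g−1)) are linearly independent over ℂ. (Lemma 3.8: the listed differentials form bases of H⁰(C,ω_C) and of H⁰(C,ω_C²) for the rosary.) -/

import Mathlib

/-!
Lemma 3.8 for the rosary of odd genus `g ≥ 5`.  We work in the product ring
`P = ∏_{i ∈ ℤ/(g-1)} ℂ(u)`, and model the canonical differentials as
`ω_i = e_i + u^(-2)·e_{i+1}` and `η = (u^(-1),…,u^(-1))`, and the bicanonical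
differentials as `x_i = ω_i²`, `y_i = ω_i·η`, `z_i = ω_{i-1}·ω_i`.
The claim: the `g` elements `ω_i, η` are linearly independent over `ℂ`, and the
`3g-3` elements `x_i, y_i, z_i` are linearly independent over `ℂ`.
-/

noncomputable section

/-- The product ring `P = ∏_{i ∈ ℤ/(g-1)} ℂ(u)`. -/
abbrev Pro (g : ℕ) : Type := ZMod (g - 1) → RatFunc ℂ

/-- `ω_i := e_i + u^(-2)·e_(i+1)`. -/
def omegaR (g : ℕ) (i : ZMod (g - 1)) : Pro g :=
  Pi.single i 1 + Pi.single (i + 1) (RatFunc.X ^ (-2 : ℤ))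

/-- `η := Σ_i u^(-1)·e_i`, i.e. the constant tuple `u^(-1)`. -/
def etaR (g : ℕ) : Pro g := fun _ => RatFunc.X ^ (-1 : ℤ)

/-- `x_i := ω_i²`. -/
def xRos (g : ℕ) (i : ZMod (g - 1)) : Pro g := omegaR g i ^ 2

/-- `y_i := ω_i·η`. -/
def yRos (g : ℕ) (i : ZMod (g - 1)) : Pro g := omegaR g i * etaR g

/-- `z_i := ω_{i-1}·ω_i`. -/
def zRos (g : ℕ) (i : ZMod (g - 1)) : Pro g := omegaR g (i - 1) * omegaR g i

open Polynomial

private lemma ros_key (a b c d e : ℂ)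
    (h : a • (1 : RatFunc ℂ) + b • RatFunc.X ^ (-1:ℤ) + c • RatFunc.X ^ (-2:ℤ)
        + d • RatFunc.X ^ (-3:ℤ) + e • RatFunc.X ^ (-4:ℤ) = 0) :
    a = 0 ∧ b = 0 ∧ c = 0 ∧ d = 0 ∧ e = 0 := by
  have hX : (RatFunc.X : RatFunc ℂ) ≠ 0 := RatFunc.X_ne_zero
  have h2 := congrArg (fun t => t * RatFunc.X ^ (4:ℤ)) h
  simp only [add_mul, smul_mul_assoc, one_mul, zero_mul, ← zpow_add₀ hX] at h2
  norm_num at h2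
  have hs : ∀ (r : ℂ) (x : RatFunc ℂ), RatFunc.C r * x = r • x := by
    intro r x; rw [Algebra.smul_def]; rfl
  have h3 : (algebraMap ℂ[X] (RatFunc ℂ))
      (C a * X^4 + C b * X^3 + C c * X^2 + C d * X^1 + C e * X^0) = 0 := by
    simp only [map_add, map_mul, map_pow, RatFunc.algebraMap_X, RatFunc.algebraMap_C,
      pow_zero, pow_one, map_one, hs]
    exact h2
  have h4 : (C a * X^4 + C b * X^3 + C c * X^2 + C d * X^1 + C e * X^0 : ℂ[X]) = 0 :=
    RatFunc.algebraMap_injective ℂ (by rw [h3, map_zero])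
  refine ⟨?_, ?_, ?_, ?_, ?_⟩
  · have := congrArg (fun p => coeff p 4) h4; simpa using this
  · have := congrArg (fun p => coeff p 3) h4; simpa using this
  · have := congrArg (fun p => coeff p 2) h4; simpa using this
  · have := congrArg (fun p => coeff p 1) h4; simpa using this
  · have := congrArg (fun p => coeff p 0) h4; simpa using this

private lemma ros_sum1 {n : ℕ} [NeZero n] (f : ZMod n → ℂ) (c : RatFunc ℂ) (j : ZMod n) :
    ∑ i, f i • (Pi.single i c : ZMod n → RatFunc ℂ) j = f j • c := by
  simp [Pi.single_apply, smul_ite]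

private lemma ros_sum2 {n : ℕ} [NeZero n] (f : ZMod n → ℂ) (c : RatFunc ℂ) (j : ZMod n) :
    ∑ i, f i • (Pi.single (i + 1) c : ZMod n → RatFunc ℂ) j = f (j - 1) • c := by
  rw [Fintype.sum_equiv (Equiv.addRight (1 : ZMod n))
    (fun i => f i • (Pi.single (i + 1) c : ZMod n → RatFunc ℂ) j)
    (fun i => f (i - 1) • (Pi.single i c : ZMod n → RatFunc ℂ) j) (by intro i; simp)]
  exact ros_sum1 _ c j

private lemma ros_one_ne (g : ℕ) (hg : 5 ≤ g) : (1 : ZMod (g-1)) ≠ 0 := by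
  intro h
  have h' : ((1:ℕ) : ZMod (g-1)) = 0 := by exact_mod_cast h
  rw [ZMod.natCast_eq_zero_iff] at h'
  have := Nat.le_of_dvd one_pos h'
  omega

private lemma ros_two_ne (g : ℕ) (hg : 5 ≤ g) : (2 : ZMod (g-1)) ≠ 0 := by
  intro h
  have h' : ((2:ℕ) : ZMod (g-1)) = 0 := by exact_mod_cast h
  rw [ZMod.natCast_eq_zero_iff] at h'
  have := Nat.le_of_dvd two_pos h'
  omega

private lemma ros_xeq (g : ℕ) (hg : 5 ≤ g) (i : ZMod (g-1)) :
    xRos g i = Pi.single i 1 + Pi.single (i + 1) (RatFunc.X ^ (-4:ℤ)) := by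
  have f1 : (1 : ZMod (g-1)) ≠ 0 := ros_one_ne g hg
  have hne : i ≠ i + 1 := by
    intro h; exact f1 (left_eq_add.mp h)
  funext j
  simp only [xRos, omegaR, Pi.pow_apply, Pi.add_apply, Pi.single_apply]
  by_cases h1 : j = i <;> by_cases h2 : j = i + 1
  · exact absurd (h1 ▸ h2) hne
  · simp [h1, h2, f1]
  · simp only [h1, h2] at *
    simp [f1, Ne.symm hne]
    ring
  · simp [h1, h2]

private lemma ros_yeq (g : ℕ) (hg : 5 ≤ g) (i : ZMod (g-1)) :
    yRos g i = Pi.single i (RatFunc.X ^ (-1:ℤ)) + Pi.single (i + 1) (RatFunc.X ^ (-3:ℤ)) := by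
  have f1 : (1 : ZMod (g-1)) ≠ 0 := ros_one_ne g hg
  have hne : i ≠ i + 1 := by
    intro h; exact f1 (left_eq_add.mp h)
  funext j
  simp only [yRos, omegaR, etaR, Pi.mul_apply, Pi.add_apply, Pi.single_apply]
  by_cases h1 : j = i <;> by_cases h2 : j = i + 1
  · exact absurd (h1 ▸ h2) hne
  · simp [h1, h2, f1]
  · simp only [h1, h2] at *
    simp [f1, Ne.symm hne]
    ring
  · simp [h1, h2]

private lemma ros_zeq (g : ℕ) (hg : 5 ≤ g) (i : ZMod (g-1)) :
    zRos g i = Pi.single i (RatFunc.X ^ (-2:ℤ)) := by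
  have f1 : (1 : ZMod (g-1)) ≠ 0 := ros_one_ne g hg
  have h1 : i - 1 ≠ i := fun h => f1 (by linear_combination -h)
  have h2 : i - 1 ≠ i + 1 := fun h => ros_two_ne g hg (by linear_combination -h)
  have h3 : i - 1 + 1 = i := by ring
  funext j
  simp only [zRos, omegaR, h3, Pi.mul_apply, Pi.add_apply, Pi.single_apply]
  by_cases ha : j = i - 1 <;> by_cases hb : j = i <;> by_cases hc : j = i + 1
  · exact absurd (ha.symm.trans hb) h1
  · exact absurd (ha.symm.trans hb) h1
  · exact absurd (ha.symm.trans hc) h2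
  · simp [ha, h1, h2, Ne.symm h1, Ne.symm h2, f1]
  · exact absurd (left_eq_add.mp (hb.symm.trans hc)) f1
  · simp [ha, hb, hc, h1, h2, Ne.symm h1, Ne.symm h2, f1]
  · simp [ha, hb, hc, h1, h2, Ne.symm h1, Ne.symm h2, f1]
  · simp [ha, hb, hc]

/-- Lemma 3.8: the `g` canonical sections `ω_i, η` are linearly independent, and so are
the `3g-3` bicanonical sections `x_i, y_i, z_i`. -/
theorem rosary_sections_linearIndependent (g : ℕ) (hodd : Odd g) (hg : 5 ≤ g) :
    LinearIndependent ℂ (Sum.elim (omegaR g) (fun _ : Unit => etaR g)) ∧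
    LinearIndependent ℂ (Sum.elim (xRos g) (Sum.elim (yRos g) (zRos g))) := by
  haveI : NeZero (g - 1) := ⟨by omega⟩
  constructor
  · rw [Fintype.linearIndependent_iff]
    intro f hf
    rw [Fintype.sum_sum_type] at hf
    simp only [Sum.elim_inl, Sum.elim_inr, omegaR, etaR, Fintype.sum_unique] at hf
    have hcomp : ∀ j : ZMod (g-1), f (Sum.inl j) • (1:RatFunc ℂ)
        + f (Sum.inl (j-1)) • RatFunc.X ^ (-2:ℤ)
        + f (Sum.inr default) • RatFunc.X ^ (-1:ℤ) = 0 := by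
      intro j
      have hj := congrFun hf j
      simp only [etaR, Pi.add_apply, Pi.zero_apply, Finset.sum_apply, Pi.smul_apply,
        smul_add, Finset.sum_add_distrib, ros_sum1, ros_sum2] at hj
      linear_combination (norm := module) hj
    intro k
    match k with
    | Sum.inl j =>
        exact (ros_key _ _ _ 0 0 (by
          linear_combination (norm := module) hcomp j)).1
    | Sum.inr () =>
        exact (ros_key _ _ _ 0 0 (by
          linear_combination (norm := module) hcomp 0)).2.1
  · rw [Fintype.linearIndependent_iff]
    intro f hf
    rw [Fintype.sum_sum_type, Fintype.sum_sum_type] at hf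
    simp only [Sum.elim_inl, Sum.elim_inr, ros_xeq g hg, ros_yeq g hg, ros_zeq g hg] at hf
    have hcomp : ∀ j : ZMod (g-1), f (Sum.inl j) • (1:RatFunc ℂ)
        + f (Sum.inr (Sum.inl j)) • RatFunc.X ^ (-1:ℤ)
        + f (Sum.inr (Sum.inr j)) • RatFunc.X ^ (-2:ℤ)
        + f (Sum.inr (Sum.inl (j-1))) • RatFunc.X ^ (-3:ℤ)
        + f (Sum.inl (j-1)) • RatFunc.X ^ (-4:ℤ) = 0 := by
      intro j
      have hj := congrFun hf j
      simp only [etaR, Pi.add_apply, Pi.zero_apply, Finset.sum_apply, Pi.smul_apply,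
        smul_add, Finset.sum_add_distrib, ros_sum1, ros_sum2] at hj
      linear_combination (norm := module) hj
    intro k
    match k with
    | Sum.inl j => exact (ros_key _ _ _ _ _ (hcomp j)).1
    | Sum.inr (Sum.inl j) => exact (ros_key _ _ _ _ _ (hcomp j)).2.1
    | Sum.inr (Sum.inr j) => exact (ros_key _ _ _ _ _ (hcomp j)).2.2.1


end
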